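/- arXiv:1702.01889 — 8 statements merged into one kernel-verified Lean document; each statement's English description precedes it below -/
import Mathlib

section
/- Let E be a metric space, Ω a measurable space, μ a probability measure on Ω, f : Ω → E a measurable map, and (a_n) a sequence of points of E such that the integrated distance ∫⁻ edist(f(t), a_n) dμ(t) tends to 0 as n → ∞. Then there exists a ∈ E such that f(t) = a for μ-almost every t. -/
open MeasureTheory

/-- The constant maps form a closed subset of `L(Ω,E)`: if the integrated distance from a
measurable map `f` to a sequence of constants `a n` tends to `0`, then `f` is a.e. constant. -/
theorem stmt5 {E Ω : Type*} [MetricSpace E] [MeasurableSpace E] [BorelSpace E]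
    [MeasurableSpace Ω] (μ : Measure Ω) [IsProbabilityMeasure μ]
    (f : Ω → E) (hf : Measurable f)
    (a : ℕ → E)
    (hconv : Filter.Tendsto (fun n => ∫⁻ t, edist (f t) (a n) ∂μ)
      Filter.atTop (nhds 0)) :
    ∃ c : E, ∀ᵐ t ∂μ, f t = c := by
  -- choose a subsequence with integrated distance ≤ 2⁻ᵏ
  have hsel : ∀ k : ℕ, ∃ n, ∫⁻ t, edist (f t) (a n) ∂μ ≤ 2⁻¹ ^ k := by
    intro k
    have hpos : (0:ENNReal) < 2⁻¹ ^ k := ENNReal.pow_pos (by norm_num) k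
    exact ((hconv.eventually_lt_const hpos).exists).imp fun n h => h.le
  choose g hg using hsel
  set b : ℕ → E := fun k => a (g k) with hb
  have hmeas : ∀ k, Measurable fun t => edist (f t) (b k) :=
    fun k => (Continuous.edist continuous_id continuous_const).measurable.comp hf
  have hsum : ∫⁻ t, ∑' k, edist (f t) (b k) ∂μ ≠ ⊤ := by
    rw [lintegral_tsum fun k => (hmeas k).aemeasurable]
    have : ∑' k, ∫⁻ t, edist (f t) (b k) ∂μ ≤ ∑' k : ℕ, (2⁻¹ : ENNReal) ^ k :=
      ENNReal.tsum_le_tsum fun k => hg k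
    refine ne_top_of_le_ne_top ?_ this
    simp [ENNReal.tsum_geometric]
  have hae : ∀ᵐ t ∂μ, ∑' k, edist (f t) (b k) < ⊤ :=
    ae_lt_top (Measurable.ennreal_tsum fun k => hmeas k) hsum
  have htend : ∀ᵐ t ∂μ, Filter.Tendsto b Filter.atTop (nhds (f t)) := by
    filter_upwards [hae] with t ht
    have h0 : Filter.Tendsto (fun k => edist (f t) (b k)) Filter.atTop (nhds 0) :=
      ENNReal.tendsto_atTop_zero_of_tsum_ne_top ht.ne
    rw [tendsto_iff_edist_tendsto_0]
    simpa [edist_comm] using h0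
  obtain ⟨t₀, ht₀⟩ := htend.exists
  refine ⟨f t₀, ?_⟩
  filter_upwards [htend] with t ht
  exact tendsto_nhds_unique ht ht₀
end

section
/- Let A and B be metric spaces with their Borel σ-algebras, φ : A → B a uniformly continuous map whose range is a bounded subset of B, Ω a measurable space, and μ a probability measure on Ω. Then for every ε > 0 there exists η > 0 such that for all measurable maps f, g : Ω → A with ∫⁻ edist(f(t), g(t)) dμ(t) ≤ η, one has ∫⁻ edist(φ(f(t)), φ(g(t))) dμ(t) ≤ ε. -/
open MeasureTheory ENNReal

/-- A uniformly continuous map with bounded range induces a uniformly continuous map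
on the spaces of measurable maps equipped with the integrated distance. -/
theorem stmt7 {A B Ω : Type*} [MetricSpace A] [MeasurableSpace A] [BorelSpace A]
    [MetricSpace B] [MeasurableSpace B] [BorelSpace B]
    [MeasurableSpace Ω] (μ : Measure Ω) [IsProbabilityMeasure μ]
    (φ : A → B) (hφ : UniformContinuous φ)
    (hbd : Bornology.IsBounded (Set.range φ))
    (ε : ℝ≥0∞) (hε : 0 < ε) :
    ∃ η : ℝ≥0∞, 0 < η ∧ ∀ f g : Ω → A, Measurable f → Measurable g →
      ∫⁻ t, edist (f t) (g t) ∂μ ≤ η →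
      ∫⁻ t, edist (φ (f t)) (φ (g t)) ∂μ ≤ ε := by
  set ε' : ℝ≥0∞ := min (ε / 2) 1 with hε'def
  have hε'0 : 0 < ε' := lt_min (ENNReal.div_pos hε.ne' (by norm_num)) one_pos
  obtain ⟨δ, hδ0, hδ⟩ := EMetric.uniformContinuous_iff.mp hφ ε' hε'0
  set δ' : ℝ≥0∞ := min δ 1 with hδ'def
  have hδ'0 : δ' ≠ 0 := (lt_min hδ0 one_pos).ne'
  have hδ'top : δ' ≠ ⊤ := ne_top_of_le_ne_top one_ne_top (min_le_right _ _)
  set C : ℝ≥0∞ := EMetric.diam (Set.range φ) with hCdef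
  have hCtop : C ≠ ⊤ := Metric.isBounded_iff_ediam_ne_top.mp hbd
  set r : ℝ≥0∞ := C / δ' with hrdef
  have hrtop : r ≠ ⊤ := (ENNReal.div_lt_top hCtop hδ'0).ne
  have hr1top : r + 1 ≠ ⊤ := ENNReal.add_ne_top.mpr ⟨hrtop, one_ne_top⟩
  refine ⟨ε' / (r + 1), ENNReal.div_pos hε'0.ne' hr1top, fun f g hf hg hfg => ?_⟩
  have hpt : ∀ t, edist (φ (f t)) (φ (g t)) ≤ ε' + r * edist (f t) (g t) := by
    intro t
    by_cases ht : edist (f t) (g t) < δ'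
    · exact le_add_right (hδ (lt_of_lt_of_le ht (min_le_left _ _))).le
    · push_neg at ht
      calc edist (φ (f t)) (φ (g t)) ≤ C :=
            EMetric.edist_le_diam_of_mem (Set.mem_range_self _) (Set.mem_range_self _)
        _ = r * δ' := (ENNReal.div_mul_cancel hδ'0 hδ'top).symm
        _ ≤ r * edist (f t) (g t) := by gcongr
        _ ≤ ε' + r * edist (f t) (g t) := le_add_self
  calc ∫⁻ t, edist (φ (f t)) (φ (g t)) ∂μ
      ≤ ∫⁻ t, (ε' + r * edist (f t) (g t)) ∂μ := lintegral_mono hpt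
    _ = ε' + ∫⁻ t, r * edist (f t) (g t) ∂μ := by
        rw [lintegral_add_left measurable_const, lintegral_const, measure_univ, mul_one]
    _ = ε' + r * ∫⁻ t, edist (f t) (g t) ∂μ := by
        rw [lintegral_const_mul' _ _ hrtop]
    _ ≤ ε' + r * (ε' / (r + 1)) := by gcongr
    _ ≤ ε' + (r + 1) * (ε' / (r + 1)) := by gcongr; exact le_self_add
    _ = ε' + ε' := by rw [ENNReal.mul_div_cancel (by simp) hr1top]
    _ ≤ ε / 2 + ε / 2 := by gcongr <;> exact min_le_left _ _
    _ = ε := ENNReal.add_halves ε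
end

section
/- Let E be a metric space and Γ a group acting on E by isometries. Let B be the set of Γ-orbits with the quotient topology, p : E → B the quotient map, and define D : B × B → ℝ by D(b₁, b₂) = inf { dist(y₁, y₂) : y₁, y₂ ∈ E, p(y₁) = b₁, p(y₂) = b₂ }. Assume p is a covering map. Then for every x ∈ E there exist δ > 0 and a map s : B → E such that s(p(x)) = x and, for all b, b₁, b₂ ∈ B with D(b, p(x)) < δ, D(b₁, p(x)) < δ and D(b₂, p(x)) < δ, one has p(s(b)) = b and dist(s(b₁), s(b₂)) = D(b₁, b₂). -/
/-- If a group `Γ` acts by isometries on a metric space `E` and the quotient map onto the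
orbit space (with the quotient topology) is a covering map, then it admits local isometric
sections with respect to the induced quotient (pseudo)metric `D`. -/
theorem stmt11 {E : Type*} [MetricSpace E] {Γ : Type*} [Group Γ] [MulAction Γ E]
    (hiso : ∀ g : Γ, Isometry fun x : E => g • x)
    (hcov : IsCoveringMap (Quotient.mk (MulAction.orbitRel Γ E)))
    (D : Quotient (MulAction.orbitRel Γ E) → Quotient (MulAction.orbitRel Γ E) → ℝ)
    (hD : ∀ b₁ b₂, D b₁ b₂ = sInf {r : ℝ | ∃ y₁ y₂ : E,
      Quotient.mk (MulAction.orbitRel Γ E) y₁ = b₁ ∧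
      Quotient.mk (MulAction.orbitRel Γ E) y₂ = b₂ ∧ dist y₁ y₂ = r})
    (x : E) :
    ∃ δ > (0 : ℝ), ∃ s : Quotient (MulAction.orbitRel Γ E) → E,
      s (Quotient.mk (MulAction.orbitRel Γ E) x) = x ∧
      (∀ b, D b (Quotient.mk (MulAction.orbitRel Γ E) x) < δ →
        Quotient.mk (MulAction.orbitRel Γ E) (s b) = b) ∧
      (∀ b₁ b₂, D b₁ (Quotient.mk (MulAction.orbitRel Γ E) x) < δ →
        D b₂ (Quotient.mk (MulAction.orbitRel Γ E) x) < δ →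
        dist (s b₁) (s b₂) = D b₁ b₂) := by
  classical
  set p : E → Quotient (MulAction.orbitRel Γ E) := Quotient.mk (MulAction.orbitRel Γ E) with hp
  -- the quotient map is constant on orbits
  have hmk : ∀ (g : Γ) (y : E), p (g • y) = p y := fun g y => Quotient.sound ⟨g, rfl⟩
  have hexact : ∀ y z : E, p y = p z → ∃ g : Γ, g • z = y := fun y z h => Quotient.exact h
  have hdist : ∀ (g : Γ) (y z : E), dist (g • y) (g • z) = dist y z :=
    fun g y z => (hiso g).dist_eq y z
  -- local injectivity of the covering map
  obtain ⟨U, hUopen, hxU, hUinj⟩ := hcov.isLocalHomeomorph.isLocallyInjective x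
  obtain ⟨ε, hε, hball⟩ := Metric.isOpen_iff.mp hUopen x hxU
  refine ⟨ε / 4, by linarith, ?_⟩
  -- injectivity on the ball of radius ε around x
  have hinj : ∀ y z : E, dist x y < ε → dist x z < ε → p y = p z → y = z := by
    intro y z hy hz hpyz
    exact hUinj (hball (by rwa [Metric.mem_ball, dist_comm]))
      (hball (by rwa [Metric.mem_ball, dist_comm])) hpyz
  set δ : ℝ := ε / 4 with hδ
  have hδpos : 0 < δ := by rw [hδ]; linarith
  -- any orbit close to the orbit of x has a representative close to x
  have hrep : ∀ b, D b (p x) < δ → ∃ y : E, p y = b ∧ dist y x < δ := by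
    intro b hb
    rw [hD] at hb
    have hne : ({r : ℝ | ∃ y₁ y₂ : E, p y₁ = b ∧ p y₂ = p x ∧ dist y₁ y₂ = r}).Nonempty :=
      ⟨dist b.out x, b.out, x, b.out_eq, rfl, rfl⟩
    obtain ⟨r, ⟨y₁, y₂, hy₁, hy₂, hr⟩, hrδ⟩ := exists_lt_of_csInf_lt hne hb
    obtain ⟨g, hg⟩ := hexact y₂ x hy₂
    refine ⟨g⁻¹ • y₁, by rw [hmk, hy₁], ?_⟩
    have : dist (g⁻¹ • y₁) x = dist y₁ y₂ := by
      rw [← hdist g, smul_inv_smul, hg]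
    rw [this, hr]; exact hrδ
  -- the section
  set s : Quotient (MulAction.orbitRel Γ E) → E := fun b =>
    if hb : b = p x then x else if h : D b (p x) < δ then (hrep b h).choose else x with hs
  have hsx : s (p x) = x := by rw [hs]; simp
  have hsec : ∀ b, D b (p x) < δ → p (s b) = b ∧ dist (s b) x < δ := by
    intro b hb
    by_cases hbx : b = p x
    · subst hbx
      rw [hsx]
      exact ⟨rfl, by rwa [dist_self]⟩
    rw [hs]
    · simp only [dif_neg hbx, dif_pos hb]
      exact ⟨(hrep b hb).choose_spec.1, (hrep b hb).choose_spec.2⟩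
  refine ⟨s, hsx, fun b hb => (hsec b hb).1, ?_⟩
  intro b₁ b₂ hb₁ hb₂
  obtain ⟨hpb₁, hd₁⟩ := hsec b₁ hb₁
  obtain ⟨hpb₂, hd₂⟩ := hsec b₂ hb₂
  -- key: translates of s b₂ cannot be closer to s b₁ than s b₂ itself
  have key : ∀ g : Γ, dist (s b₁) (s b₂) ≤ dist (s b₁) (g • s b₂) := by
    intro g
    by_contra hlt
    push_neg at hlt
    have h1 : dist (s b₁) (s b₂) < 2 * δ := by
      calc dist (s b₁) (s b₂) ≤ dist (s b₁) x + dist x (s b₂) := dist_triangle _ _ _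
        _ < δ + δ := by rw [dist_comm x (s b₂)]; exact add_lt_add hd₁ hd₂
        _ = 2 * δ := by ring
    have h2 : dist x (g • s b₂) < 3 * δ := by
      calc dist x (g • s b₂) ≤ dist x (s b₁) + dist (s b₁) (g • s b₂) := dist_triangle _ _ _
        _ < δ + 2 * δ := by
            rw [dist_comm x (s b₁)]
            exact add_lt_add_of_le_of_lt hd₁.le (hlt.trans h1)
        _ = 3 * δ := by ring
    have heq : g • s b₂ = s b₂ := by
      refine hinj (g • s b₂) (s b₂) (by rw [hδ] at h2; linarith) ?_ (by rw [hmk, hpb₂])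
      rw [dist_comm]; rw [hδ] at hd₂; linarith
    rw [heq] at hlt
    exact absurd rfl hlt.ne
  rw [hD]
  have hmem : dist (s b₁) (s b₂) ∈
      {r : ℝ | ∃ y₁ y₂ : E, p y₁ = b₁ ∧ p y₂ = b₂ ∧ dist y₁ y₂ = r} :=
    ⟨s b₁, s b₂, hpb₁, hpb₂, rfl⟩
  refine le_antisymm ?_ (csInf_le ⟨0, fun r ⟨y₁, y₂, _, _, hr⟩ => hr ▸ dist_nonneg⟩ hmem)
  refine le_csInf ⟨_, hmem⟩ ?_
  rintro r ⟨y₁, y₂, hy₁, hy₂, rfl⟩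
  obtain ⟨g₁, hg₁⟩ := hexact y₁ (s b₁) (by rw [hy₁, hpb₁])
  obtain ⟨g₂, hg₂⟩ := hexact y₂ (s b₂) (by rw [hy₂, hpb₂])
  calc dist (s b₁) (s b₂) ≤ dist (s b₁) ((g₁⁻¹ * g₂) • s b₂) := key _
    _ = dist (g₁ • s b₁) (g₁ • ((g₁⁻¹ * g₂) • s b₂)) := (hdist g₁ _ _).symm
    _ = dist y₁ y₂ := by rw [hg₁, smul_smul, mul_inv_cancel_left, hg₂]
end

section
/- Model the circle as A = ℝ/2ℤ (the additive circle of period 2) with its quotient metric dist(x̄, ȳ) = min_{k ∈ ℤ} |x − y − 2k|, which has diameter 1. Let Ω be a measurable space with a probability measure μ, f : Ω → A measurable, and α > 0 with ∫ dist(f(t), 0) dμ(t) < α. For x ∈ ℝ set F(x) = ∫ dist(f(t), x̄) dμ(t), where x̄ is the class of x in A. Then: (1) if 1/2 ≤ |x| ≤ 1 then F(x) ≥ 1/4 − α; (2) if |x| ≤ 1/16 then F(x) ≤ 1/8 + 16α; (3) if α < 1/64 and 1/16 ≤ y < x ≤ 1/2 then F(y) < F(x); (4) if α < 1/64 and −1/2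 ≤ x < y ≤ −1/16 then F(y) < F(x). -/
open MeasureTheory

section Aux

lemma addCircle2_norm_eq_abs {u : ℝ} (hu : |u| ≤ 1) : ‖(u : AddCircle (2 : ℝ))‖ = |u| := by
  rw [AddCircle.norm_coe_eq_abs_iff (2 : ℝ) (by norm_num)]
  norm_num [hu]

lemma addCircle2_norm_le_one (z : AddCircle (2 : ℝ)) : ‖z‖ ≤ 1 := by
  have := AddCircle.norm_le_half_period (2 : ℝ) (x := z) (by norm_num)
  norm_num at this
  exact this

lemma addCircle2_dist_le_one (a b : AddCircle (2 : ℝ)) : dist a b ≤ 1 := by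
  rw [dist_eq_norm]; exact addCircle2_norm_le_one _

lemma addCircle2_exists_rep (z : AddCircle (2 : ℝ)) :
    ∃ u : ℝ, (u : AddCircle (2 : ℝ)) = z ∧ |u| = ‖z‖ := by
  induction z using QuotientAddGroup.induction_on with
  | H v => ?_
  refine ⟨v - round ((2 : ℝ)⁻¹ * v) * 2, ?_, ?_⟩
  · have h0 : (((round ((2 : ℝ)⁻¹ * v) : ℝ) * 2 : ℝ) : AddCircle (2 : ℝ)) = 0 := by
      rw [AddCircle.coe_eq_zero_iff]
      exact ⟨round ((2 : ℝ)⁻¹ * v), by rw [zsmul_eq_mul]⟩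
    rw [AddCircle.coe_sub, h0, sub_zero]
  · rw [AddCircle.norm_eq]

lemma addCircle2_dist_coe {u x : ℝ} (h : |u - x| ≤ 1) :
    dist (u : AddCircle (2 : ℝ)) (x : AddCircle (2 : ℝ)) = |u - x| := by
  rw [dist_eq_norm]
  rw [← AddCircle.coe_sub, addCircle2_norm_eq_abs h]

lemma addCircle2_dist_coe_le (x y : ℝ) :
    dist (x : AddCircle (2 : ℝ)) (y : AddCircle (2 : ℝ)) ≤ |x - y| := by
  rw [dist_eq_norm]
  rw [← AddCircle.coe_sub]
  simpa [Real.norm_eq_abs] using (QuotientAddGroup.norm_mk_le_norm : ‖((x - y : ℝ) : AddCircle (2 : ℝ))‖ ≤ ‖x - y‖)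

variable {Ω : Type*} [MeasurableSpace Ω] (μ : Measure Ω) [IsProbabilityMeasure μ]
  {f : Ω → AddCircle (2 : ℝ)}

lemma integrable_dist_f (hf : Measurable f) (c : AddCircle (2 : ℝ)) :
    Integrable (fun t => dist (f t) c) μ := by
  refine Integrable.mono' (integrable_const (1 : ℝ)) ?_ ?_
  · exact ((continuous_id.dist continuous_const).measurable.comp hf).aestronglyMeasurable
  · filter_upwards with t
    rw [Real.norm_eq_abs, abs_of_nonneg dist_nonneg]
    exact addCircle2_dist_le_one _ _

/-- Core strict inequality lemma. -/
lemma key_lt (hf : Measurable f) {a b : AddCircle (2 : ℝ)} {c : ℝ} (hc : 0 < c)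
    {s : Set Ω} (hs : MeasurableSet s) (hμs : (μ sᶜ).toReal < 1 / 4)
    (hgood : ∀ t ∈ s, dist (f t) a - dist (f t) b = c)
    (hlip : ∀ t, -c ≤ dist (f t) a - dist (f t) b) :
    ∫ t, dist (f t) b ∂μ < ∫ t, dist (f t) a ∂μ := by
  have hia := integrable_dist_f μ hf a
  have hib := integrable_dist_f μ hf b
  have hint : Integrable (fun t => dist (f t) a - dist (f t) b) μ := hia.sub hib
  have hsum : (μ s).toReal + (μ sᶜ).toReal = 1 := by
    have h1 : μ s + μ sᶜ = 1 := by
      rw [measure_add_measure_compl hs, measure_univ]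
    have := congrArg ENNReal.toReal h1
    rwa [ENNReal.toReal_add (measure_ne_top μ s) (measure_ne_top μ sᶜ)] at this
  have hsplit : ∫ t, (dist (f t) a - dist (f t) b) ∂μ
      = (∫ t in s, (dist (f t) a - dist (f t) b) ∂μ)
      + ∫ t in sᶜ, (dist (f t) a - dist (f t) b) ∂μ :=
    (integral_add_compl hs hint).symm
  have h1 : ∫ t in s, (dist (f t) a - dist (f t) b) ∂μ = (μ s).toReal * c := by
    rw [setIntegral_congr_fun hs hgood, setIntegral_const, smul_eq_mul]; rfl
  have h2 : -(c * (μ sᶜ).toReal) ≤ ∫ t in sᶜ, (dist (f t) a - dist (f t) b) ∂μ := by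
    have := setIntegral_ge_of_const_le_real (c := -c) hs.compl (measure_ne_top μ sᶜ)
      (fun t _ => hlip t) (hint.integrableOn)
    calc -(c * (μ sᶜ).toReal) = (-c) * (μ sᶜ).toReal := by ring
    _ ≤ _ := this
  have hdiff : 0 < ∫ t, (dist (f t) a - dist (f t) b) ∂μ := by
    rw [hsplit, h1]
    nlinarith [ENNReal.toReal_nonneg (a := μ sᶜ)]
  rw [integral_sub hia hib] at hdiff
  linarith

end Aux

/-- The key monotonicity lemma for the averaged distance function
`F x = ∫ dist (f t) x̄ dμ` on the circle `ℝ/2ℤ`, for a random variable `f`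
concentrated in measure near `0`. -/
theorem stmt12 {Ω : Type*} [MeasurableSpace Ω] (μ : Measure Ω) [IsProbabilityMeasure μ]
    (f : Ω → AddCircle (2 : ℝ)) (hf : Measurable f)
    (α : ℝ) (hα : 0 < α)
    (hconc : ∫ t, dist (f t) (0 : AddCircle (2 : ℝ)) ∂μ < α)
    (F : ℝ → ℝ)
    (hF : ∀ x : ℝ, F x = ∫ t, dist (f t) ((x : AddCircle (2 : ℝ))) ∂μ) :
    (∀ x : ℝ, 1 / 2 ≤ |x| → |x| ≤ 1 → 1 / 4 - α ≤ F x) ∧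
    (∀ x : ℝ, |x| ≤ 1 / 16 → F x ≤ 1 / 8 + 16 * α) ∧
    (α < 1 / 64 → ∀ x y : ℝ, 1 / 16 ≤ y → y < x → x ≤ 1 / 2 → F y < F x) ∧
    (α < 1 / 64 → ∀ x y : ℝ, -(1 / 2) ≤ x → x < y → y ≤ -(1 / 16) → F y < F x) := by
  have hint : ∀ c : AddCircle (2 : ℝ), Integrable (fun t => dist (f t) c) μ :=
    integrable_dist_f μ hf
  -- the "good" set where `f` is within `1/16` of `0`
  set s : Set Ω := {t | dist (f t) 0 < 1 / 16} with hs_def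
  have hs : MeasurableSet s :=
    measurableSet_lt ((continuous_id.dist continuous_const).measurable.comp hf)
      measurable_const
  -- Markov-type bound on the complement, under `α < 1/64`
  have hμsc : α < 1 / 64 → (μ sᶜ).toReal < 1 / 4 := by
    intro hα64
    have hle : (1 / 16 : ℝ) * (μ sᶜ).toReal ≤ ∫ t in sᶜ, dist (f t) 0 ∂μ := by
      refine setIntegral_ge_of_const_le_real hs.compl (measure_ne_top μ sᶜ) ?_
        ((hint 0).integrableOn)
      intro t ht
      simpa [hs_def, not_lt] using ht
    have hle2 : ∫ t in sᶜ, dist (f t) 0 ∂μ ≤ ∫ t, dist (f t) 0 ∂μ :=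
      setIntegral_le_integral (hint 0) (by filter_upwards with t using dist_nonneg)
    linarith
  refine ⟨?_, ?_, ?_, ?_⟩
  · -- part 1
    intro x hx1 hx2
    have hnorm : dist (0 : AddCircle (2 : ℝ)) (x : AddCircle (2 : ℝ)) = |x| := by
      rw [dist_eq_norm, zero_sub, norm_neg]
      exact addCircle2_norm_eq_abs hx2
    have hpt : ∀ t, |x| - dist (f t) 0 ≤ dist (f t) (x : AddCircle (2 : ℝ)) := by
      intro t
      have := dist_triangle (0 : AddCircle (2 : ℝ)) (f t) (x : AddCircle (2 : ℝ))
      rw [hnorm] at this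
      rw [dist_comm] at this
      linarith
    have hmono : ∫ t, (|x| - dist (f t) 0) ∂μ ≤ ∫ t, dist (f t) (x : AddCircle (2 : ℝ)) ∂μ :=
      integral_mono ((integrable_const _).sub (hint 0)) (hint _) hpt
    rw [integral_sub (integrable_const _) (hint 0), integral_const, probReal_univ] at hmono
    simp only [ENNReal.toReal_one, smul_eq_mul, one_mul] at hmono
    rw [hF x]
    linarith
  · -- part 2
    intro x hx
    have hnorm : dist (0 : AddCircle (2 : ℝ)) (x : AddCircle (2 : ℝ)) = |x| := by
      rw [dist_eq_norm, zero_sub, norm_neg]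
      exact addCircle2_norm_eq_abs (by linarith [abs_nonneg x])
    have hpt : ∀ t, dist (f t) (x : AddCircle (2 : ℝ)) ≤ dist (f t) 0 + |x| := by
      intro t
      have := dist_triangle (f t) (0 : AddCircle (2 : ℝ)) (x : AddCircle (2 : ℝ))
      rw [hnorm] at this
      linarith
    have hmono : ∫ t, dist (f t) (x : AddCircle (2 : ℝ)) ∂μ
        ≤ ∫ t, (dist (f t) 0 + |x|) ∂μ :=
      integral_mono (hint _) ((hint 0).add (integrable_const _)) hpt
    rw [integral_add (hint 0) (integrable_const _), integral_const, probReal_univ] at hmono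
    simp only [ENNReal.toReal_one, smul_eq_mul, one_mul] at hmono
    rw [hF x]
    linarith
  · -- part 3
    intro hα64 x y hy hyx hx
    rw [hF x, hF y]
    refine key_lt μ hf (a := (x : AddCircle (2 : ℝ))) (b := (y : AddCircle (2 : ℝ)))
      (c := x - y) (by linarith) hs (hμsc hα64) ?_ ?_
    · intro t ht
      obtain ⟨u, hu, hu'⟩ := addCircle2_exists_rep (f t)
      have hud : |u| < 1 / 16 := by
        rw [hu', ← dist_zero_right]
        simpa [dist_comm, hs_def] using ht
      have habs := abs_lt.mp hud
      rw [← hu, addCircle2_dist_coe (by rw [abs_of_nonpos (by linarith)]; linarith),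
        addCircle2_dist_coe (by rw [abs_of_nonpos (by linarith)]; linarith)]
      rw [abs_of_nonpos (by linarith), abs_of_nonpos (by linarith)]
      ring
    · intro t
      have h1 := abs_dist_sub_le (x : AddCircle (2 : ℝ)) (y : AddCircle (2 : ℝ)) (f t)
      have h2 := addCircle2_dist_coe_le x y
      rw [abs_of_nonneg (by linarith : (0:ℝ) ≤ x - y)] at h2
      rw [abs_le] at h1
      have := h1.1
      rw [dist_comm (x : AddCircle (2 : ℝ)) (f t), dist_comm (y : AddCircle (2 : ℝ)) (f t)] at this
      linarith
  · -- part 4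
    intro hα64 x y hx hxy hy
    rw [hF x, hF y]
    refine key_lt μ hf (a := (x : AddCircle (2 : ℝ))) (b := (y : AddCircle (2 : ℝ)))
      (c := y - x) (by linarith) hs (hμsc hα64) ?_ ?_
    · intro t ht
      obtain ⟨u, hu, hu'⟩ := addCircle2_exists_rep (f t)
      have hud : |u| < 1 / 16 := by
        rw [hu', ← dist_zero_right]
        simpa [dist_comm, hs_def] using ht
      have habs := abs_lt.mp hud
      rw [← hu, addCircle2_dist_coe (by rw [abs_of_nonneg (by linarith)]; linarith),
        addCircle2_dist_coe (by rw [abs_of_nonneg (by linarith)]; linarith)]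
      rw [abs_of_nonneg (by linarith), abs_of_nonneg (by linarith)]
      ring
    · intro t
      have h1 := abs_dist_sub_le (x : AddCircle (2 : ℝ)) (y : AddCircle (2 : ℝ)) (f t)
      have h2 := addCircle2_dist_coe_le x y
      rw [abs_of_nonpos (by linarith : x - y ≤ (0:ℝ))] at h2
      rw [abs_le] at h1
      have := h1.1
      rw [dist_comm (x : AddCircle (2 : ℝ)) (f t), dist_comm (y : AddCircle (2 : ℝ)) (f t)] at this
      linarith
end

section
/- Let μ be Lebesgue measure on the interval [0,1]. The map from L¹(μ; ℝ) to L¹(μ; ℝ) which sends (the equivalence class of) a function g to (the equivalence class of) the indicator function of the set {t : g(t) > 0} is Borel measurable, with respect to the Borel σ-algebras of the L¹ norm topology. -/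
open MeasureTheory Filter Topology

/-- The map `L¹([0,1];ℝ) → L¹([0,1];ℝ)` sending (the class of) `g` to (the class of) the
indicator function of `{t : g t > 0}` is Borel measurable for the L¹ norm topology. -/
theorem stmt14
    (T : Lp ℝ 1 (volume.restrict (Set.Icc (0 : ℝ) 1)) →
      Lp ℝ 1 (volume.restrict (Set.Icc (0 : ℝ) 1)))
    (hT : ∀ g : Lp ℝ 1 (volume.restrict (Set.Icc (0 : ℝ) 1)),
      (T g : ℝ → ℝ) =ᵐ[volume.restrict (Set.Icc (0 : ℝ) 1)]
        Set.indicator {t : ℝ | 0 < (g : ℝ → ℝ) t} 1) :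
    @Measurable _ _ (borel _) (borel _) T := by
  revert hT
  revert T
  set μ := volume.restrict (Set.Icc (0 : ℝ) 1) with hμdef
  intro T hT
  haveI : IsFiniteMeasure μ := ⟨by
    rw [hμdef, Measure.restrict_apply_univ]; exact measure_Icc_lt_top⟩
  letI : MeasurableSpace (Lp ℝ 1 μ) := borel _
  haveI : BorelSpace (Lp ℝ 1 μ) := ⟨rfl⟩
  have hone : MemLp (fun _ : ℝ => (1 : ℝ)) 1 μ := memLp_const 1
  set c : Lp ℝ 1 μ := hone.toLp _ with hc
  set φ : ℕ → Lp ℝ 1 μ → Lp ℝ 1 μ := fun n g => (((n : ℝ) • g) ⊓ c) ⊔ 0 with hφ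
  have hmeas : ∀ n, Measurable (φ n) := fun n =>
    (((continuous_const_smul ((n : ℝ))).inf continuous_const).sup
      continuous_const).measurable
  refine measurable_of_tendsto_metrizable hmeas (tendsto_pi_nhds.mpr fun g => ?_)
  rw [Lp.tendsto_Lp_iff_tendsto_eLpNorm']
  set F : ℕ → ℝ → ℝ := fun n t => max (min ((n : ℝ) * (g : ℝ → ℝ) t) 1) 0 with hF
  set f : ℝ → ℝ := Set.indicator {t : ℝ | 0 < (g : ℝ → ℝ) t} 1 with hf
  have hrep : ∀ n : ℕ, ⇑(φ n g) =ᵐ[μ] F n := by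
    intro n
    filter_upwards [Lp.coeFn_sup (((n : ℝ) • g) ⊓ c) 0, Lp.coeFn_inf ((n : ℝ) • g) c,
      Lp.coeFn_smul ((n : ℝ)) g, hone.coeFn_toLp, Lp.coeFn_zero ℝ 1 μ] with t h1 h2 h3 h4 h5
    simp only [hφ, h1, Pi.sup_apply, h2, Pi.inf_apply, h3, Pi.smul_apply, h4, h5,
      smul_eq_mul, hF]
    rw [hc, h4]; rfl
  have hFmeas : ∀ n, AEStronglyMeasurable (F n) μ := fun n =>
    (Continuous.comp_aestronglyMeasurable
      (((continuous_const.mul continuous_id).min continuous_const).max continuous_const)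
      (Lp.aestronglyMeasurable g))
  have h_bound : ∀ n, ∀ᵐ t ∂μ, ‖F n t‖ ≤ (1 : ℝ) := by
    intro n
    filter_upwards with t
    rw [Real.norm_eq_abs, abs_of_nonneg (le_max_right _ _)]
    exact max_le (min_le_right _ _) zero_le_one
  have h_lim : ∀ᵐ t ∂μ, Tendsto (fun n => F n t) atTop (𝓝 (f t)) := by
    filter_upwards with t
    by_cases h : 0 < (g : ℝ → ℝ) t
    · have hf1 : f t = 1 := by simp [hf, Set.indicator_of_mem, h]
      rw [hf1]
      refine Tendsto.congr' ?_ tendsto_const_nhds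
      filter_upwards [eventually_ge_atTop ⌈((g : ℝ → ℝ) t)⁻¹⌉₊] with n hn
      have h1 : (1 : ℝ) ≤ (n : ℝ) * (g : ℝ → ℝ) t := by
        have : ((g : ℝ → ℝ) t)⁻¹ ≤ (n : ℝ) := le_trans (Nat.le_ceil _) (by exact_mod_cast hn)
        calc (1 : ℝ) = ((g : ℝ → ℝ) t)⁻¹ * (g : ℝ → ℝ) t := by
              field_simp
          _ ≤ (n : ℝ) * (g : ℝ → ℝ) t := by gcongr
      simp [hF, min_eq_right h1]
    · have hf0 : f t = 0 := by simp [hf, Set.indicator_of_notMem, h]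
      rw [hf0]
      have : ∀ n : ℕ, F n t = 0 := by
        intro n
        have hle : (n : ℝ) * (g : ℝ → ℝ) t ≤ 0 :=
          mul_nonpos_of_nonneg_of_nonpos (Nat.cast_nonneg n) (not_lt.mp h)
        simp [hF, min_eq_left (hle.trans zero_le_one), max_eq_right hle]
      simp only [this]
      exact tendsto_const_nhds
  have key := tendsto_lintegral_norm_of_dominated_convergence hFmeas
    (hasFiniteIntegral_const (1 : ℝ)) h_bound h_lim
  refine key.congr fun n => ?_
  have h1 : eLpNorm (⇑(φ n g) - ⇑(T g)) 1 μ = eLpNorm (fun a => F n a - f a) 1 μ :=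
    eLpNorm_congr_ae ((hrep n).sub (hT g))
  rw [h1, eLpNorm_one_eq_lintegral_enorm]
  simp_rw [ofReal_norm]
end

section
/- Let λ denote Lebesgue measure on [0,1]. Let A ⊆ [0,1]² be a set such that (i) for every x ∈ [0,1] the section A_x = { y ∈ [0,1] : (x,y) ∈ A } is a Borel set, and (ii) the map x ↦ 1_{A_x}, regarded as a map from [0,1] into L¹(λ; ℝ), is Borel measurable. Then there exists a Borel measurable set B ⊆ [0,1]² such that λ(A_x Δ B_x) = 0 for λ-almost every x ∈ [0,1], where B_x = { y : (x,y) ∈ B } and Δ denotes symmetric difference. -/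
open MeasureTheory

open Filter Set Metric
open scoped ENNReal Topology

set_option maxHeartbeats 1000000

noncomputable section

namespace Stmt15Aux

lemma measurable_setInt (μ : Measure ℝ) [IsFiniteMeasure μ] [NullSingletonClass μ]
    (F : ℝ → Lp ℝ 1 μ)
    (hFmeas : @Measurable ℝ _ _ (borel _) F) (r : ℝ) (hr : 0 ≤ r) :
    Measurable fun p : ℝ × ℝ =>
      ∫ t in closedBall p.2 r, (F p.1 : ℝ → ℝ) t ∂μ := by
  letI : MeasurableSpace (Lp ℝ 1 μ) := borel _
  haveI : BorelSpace (Lp ℝ 1 μ) := ⟨rfl⟩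
  have hcont : ∀ x, Continuous fun y => ∫ t in closedBall y r, (F x : ℝ → ℝ) t ∂μ := by
    intro x
    have hint : Integrable (F x : ℝ → ℝ) μ := L1.integrable_coeFn (F x)
    have key : ∀ y : ℝ, (∫ t in closedBall y r, (F x : ℝ → ℝ) t ∂μ) =
        (∫ t in (0:ℝ)..(y + r), (F x : ℝ → ℝ) t ∂μ)
          - ∫ t in (0:ℝ)..(y - r), (F x : ℝ → ℝ) t ∂μ := by
      intro y
      have h1 : (∫ t in closedBall y r, (F x : ℝ → ℝ) t ∂μ)
          = ∫ t in (y - r)..(y + r), (F x : ℝ → ℝ) t ∂μ := by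
        rw [Real.closedBall_eq_Icc, integral_Icc_eq_integral_Ioc,
          intervalIntegral.integral_of_le (by linarith)]
      rw [h1, ← intervalIntegral.integral_interval_sub_left
        hint.intervalIntegrable hint.intervalIntegrable]
    have hc := hint.continuous_primitive 0
    simp only [key]
    exact (hc.comp (continuous_id.add continuous_const)).sub
      (hc.comp (continuous_id.sub continuous_const))
  have hmeas : ∀ y : ℝ, Measurable fun x => ∫ t in closedBall y r, (F x : ℝ → ℝ) t ∂μ :=
    fun y => ((continuous_setIntegral (μ := μ) (closedBall y r)).measurable).comp hFmeas
  have h2 : Measurable (Function.uncurry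
      (fun y x => ∫ t in closedBall y r, (F x : ℝ → ℝ) t ∂μ)) :=
    measurable_uncurry_of_continuous_of_measurable
      (u := fun y x => ∫ t in closedBall y r, (F x : ℝ → ℝ) t ∂μ) hcont hmeas
  have h3 := h2.comp (measurable_swap (α := ℝ) (β := ℝ))
  exact h3

/-- The averaged functions. -/
def g (F : ℝ → Lp ℝ 1 (volume.restrict (Set.Icc (0:ℝ) 1))) (n : ℕ) (p : ℝ × ℝ) : ℝ :=
  ⨍ t in closedBall p.2 (1/(n+1)),
    (Set.Icc (0:ℝ) 1).indicator (F p.1 : ℝ → ℝ) t ∂volume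

/-- The candidate Borel set. -/
def Bset (F : ℝ → Lp ℝ 1 (volume.restrict (Set.Icc (0:ℝ) 1))) : Set (ℝ × ℝ) :=
  {p : ℝ × ℝ | (1/2 : ℝ≥0∞) ≤ limsup (fun n => ENNReal.ofReal (g F n p)) atTop}

lemma g_eq (F : ℝ → Lp ℝ 1 (volume.restrict (Set.Icc (0:ℝ) 1))) (n : ℕ) (p : ℝ × ℝ) :
    g F n p = (volume (closedBall p.2 (1/(n+1):ℝ))).toReal⁻¹ •
      ∫ t in closedBall p.2 (1/(n+1):ℝ), (F p.1 : ℝ → ℝ) t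
        ∂(volume.restrict (Set.Icc (0:ℝ) 1)) := by
  rw [g, setAverage_eq, setIntegral_indicator measurableSet_Icc,
    ← Measure.restrict_restrict (measurableSet_closedBall)]
  rfl

lemma g_meas (F : ℝ → Lp ℝ 1 (volume.restrict (Set.Icc (0:ℝ) 1)))
    (hFmeas : @Measurable ℝ _ _ (borel _) F) (n : ℕ) : Measurable (g F n) := by
  have hpos : (0:ℝ) < 1/(n+1) := by positivity
  have h1 := measurable_setInt (volume.restrict (Set.Icc (0:ℝ) 1)) F hFmeas
    (1/(n+1)) hpos.le
  have heq : g F n = fun p => ((2 * (1/(n+1):ℝ))⁻¹ : ℝ) •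
      ∫ t in closedBall p.2 (1/(n+1):ℝ), (F p.1 : ℝ → ℝ) t
        ∂(volume.restrict (Set.Icc (0:ℝ) 1)) := by
    funext p
    rw [g_eq, Real.volume_closedBall, ENNReal.toReal_ofReal (by positivity)]
  rw [heq]
  exact h1.const_smul ((2 * (1/(n+1):ℝ))⁻¹)

lemma Bset_meas (F : ℝ → Lp ℝ 1 (volume.restrict (Set.Icc (0:ℝ) 1)))
    (hFmeas : @Measurable ℝ _ _ (borel _) F) : MeasurableSet (Bset F) :=
by
  unfold Bset
  exact measurableSet_le measurable_const
    (Measurable.limsup fun n => (g_meas F hFmeas n).ennreal_ofReal)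

end Stmt15Aux

open Stmt15Aux

/-- If `A ⊆ [0,1]²` has Borel sections and the section map `x ↦ 1_{A_x}` is a Borel map
into `L¹([0,1];ℝ)`, then there is a Borel set `B ⊆ [0,1]²` whose sections agree with those
of `A` up to null sets, for almost every `x`. -/
theorem stmt15 (A : Set (ℝ × ℝ))
    (hAsub : A ⊆ Set.Icc (0 : ℝ) 1 ×ˢ Set.Icc (0 : ℝ) 1)
    (hsec : ∀ x : ℝ, MeasurableSet {y : ℝ | (x, y) ∈ A})
    (F : ℝ → Lp ℝ 1 (volume.restrict (Set.Icc (0 : ℝ) 1)))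
    (hFval : ∀ x : ℝ, (F x : ℝ → ℝ) =ᵐ[volume.restrict (Set.Icc (0 : ℝ) 1)]
      Set.indicator {y : ℝ | (x, y) ∈ A} 1)
    (hFmeas : @Measurable ℝ _ _ (borel _) F) :
    ∃ B : Set (ℝ × ℝ), MeasurableSet B ∧
      ∀ᵐ x ∂(volume.restrict (Set.Icc (0 : ℝ) 1)),
        volume (symmDiff {y : ℝ | (x, y) ∈ A} {y : ℝ | (x, y) ∈ B}) = 0 := by
  classical
  refine ⟨Bset F, Bset_meas F hFmeas, ae_of_all _ fun x => ?_⟩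
  -- the section function, extended by zero outside `[0,1]`
  have hFint : Integrable (F x : ℝ → ℝ) (volume.restrict (Set.Icc (0:ℝ) 1)) :=
    L1.integrable_coeFn (F x)
  have hu_int : Integrable ((Set.Icc (0:ℝ) 1).indicator (F x : ℝ → ℝ)) volume :=
    IntegrableOn.integrable_indicator hFint measurableSet_Icc
  -- a.e. equality with the indicator of the section of `A`
  have hval : (Set.Icc (0:ℝ) 1).indicator (F x : ℝ → ℝ)
      =ᵐ[volume] Set.indicator {y : ℝ | (x, y) ∈ A} 1 := by
    have hS := hFval x
    rw [EventuallyEq, ae_iff] at hS ⊢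
    have hSset : volume ({t : ℝ | ¬ (F x : ℝ → ℝ) t
        = Set.indicator {y : ℝ | (x, y) ∈ A} 1 t} ∩ Set.Icc (0:ℝ) 1) = 0 := by
      rw [← Measure.restrict_apply' measurableSet_Icc]; exact hS
    refine measure_mono_null ?_ hSset
    intro t ht
    simp only [mem_setOf_eq] at ht ⊢
    by_cases hmem : t ∈ Set.Icc (0:ℝ) 1
    · refine ⟨?_, hmem⟩
      rwa [Set.indicator_of_mem hmem] at ht
    · exfalso; apply ht
      rw [Set.indicator_of_notMem hmem, Set.indicator_of_notMem]
      intro hA; exact hmem (hAsub hA).2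
  -- Lebesgue differentiation
  have hdiff := IsUnifLocDoublingMeasure.ae_tendsto_average (μ := (volume : Measure ℝ))
    hu_int.locallyIntegrable 1
  have hδlim : Tendsto (fun n : ℕ => 1/((n:ℝ)+1)) atTop (𝓝[>] (0:ℝ)) :=
    tendsto_nhdsWithin_of_tendsto_nhds_of_eventually_within _
      tendsto_one_div_add_atTop_nhds_zero_nat
      (Eventually.of_forall fun n => Set.mem_Ioi.2 (by positivity))
  have hae : ∀ᵐ y ∂(volume : Measure ℝ),
      Tendsto (fun n => g F n (x, y)) atTop
        (𝓝 ((Set.Icc (0:ℝ) 1).indicator (F x : ℝ → ℝ) y)) ∧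
      (Set.Icc (0:ℝ) 1).indicator (F x : ℝ → ℝ) y
        = Set.indicator {y : ℝ | (x, y) ∈ A} 1 y := by
    filter_upwards [hdiff, hval] with y h1 h2
    refine ⟨?_, h2⟩
    have := h1 (fun _ : ℕ => y) (fun n : ℕ => 1/((n:ℝ)+1)) hδlim
      (Eventually.of_forall fun n => mem_closedBall_self (by positivity : (0:ℝ) ≤ 1 * (1/((n:ℝ)+1))))
    exact this
  have hmem : ∀ᵐ y ∂(volume : Measure ℝ), ((x, y) ∈ A ↔ (x, y) ∈ Bset F) := by
    filter_upwards [hae] with y hy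
    obtain ⟨h1, h2⟩ := hy
    have hlimsup : limsup (fun n => ENNReal.ofReal (g F n (x, y))) atTop
        = ENNReal.ofReal ((Set.Icc (0:ℝ) 1).indicator (F x : ℝ → ℝ) y) :=
      (ENNReal.tendsto_ofReal h1).limsup_eq
    constructor
    · intro hA
      show (1/2 : ℝ≥0∞) ≤ _
      rw [hlimsup, h2, Set.indicator_of_mem (show y ∈ {y : ℝ | (x, y) ∈ A} from hA)]
      simp only [Pi.one_apply, ENNReal.ofReal_one]
      exact ENNReal.div_le_of_le_mul (by norm_num)
    · intro hB
      by_contra hA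
      have h0 : (Set.Icc (0:ℝ) 1).indicator (F x : ℝ → ℝ) y = 0 := by
        rw [h2, Set.indicator_of_notMem (show y ∉ {y : ℝ | (x, y) ∈ A} from hA)]
      have hB' : (1/2:ℝ≥0∞) ≤ ENNReal.ofReal
          ((Set.Icc (0:ℝ) 1).indicator (F x : ℝ → ℝ) y) := by
        rw [← hlimsup]; exact hB
      rw [h0, ENNReal.ofReal_zero] at hB'
      simp at hB'
  rw [ae_iff] at hmem
  refine measure_mono_null ?_ hmem
  intro y hy
  rw [Set.mem_symmDiff] at hy
  simp only [mem_setOf_eq] at hy ⊢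
  intro hiff
  rcases hy with ⟨h1, h2⟩ | ⟨h1, h2⟩
  · exact h2 (hiff.1 h1)
  · exact h2 (hiff.2 h1)
end
end

section
/- Let λ denote Lebesgue measure on [0,1] and fix m > 0. Let F : [0,1] → L¹(λ; ℝ) be a Borel measurable map such that for every x ∈ [0,1], the function F(x) satisfies 0 ≤ F(x)(y) ≤ m for λ-almost every y. Then there exists a jointly measurable function f : [0,1] × [0,1] → ℝ with values in [0, m] such that for λ-almost every x ∈ [0,1], the function y ↦ f(x,y) is λ-almost everywhere equal to (a representative of) F(x). -/
open MeasureTheory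

open Filter Metric

theorem aux_cont {α : Type*} [MeasurableSpace α] (μ : Measure α) (s : Set α) :
    Continuous (fun g : Lp ℝ 1 μ => ∫ z in s, g z ∂μ) := by
  have : LipschitzWith 1 (fun g : Lp ℝ 1 μ => ∫ z in s, g z ∂μ) := by
    apply LipschitzWith.of_dist_le_mul
    intro g g'
    rw [NNReal.coe_one, one_mul, Real.dist_eq]
    have hg := L1.integrable_coeFn g
    have hg' := L1.integrable_coeFn g'
    calc |(∫ z in s, g z ∂μ) - ∫ z in s, g' z ∂μ|
        = |∫ z in s, (g z - g' z) ∂μ| := by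
          rw [integral_sub hg.integrableOn hg'.integrableOn]
      _ ≤ ∫ z in s, |g z - g' z| ∂μ := by
          simpa using norm_integral_le_integral_norm (μ := μ.restrict s) fun z => g z - g' z
      _ ≤ ∫ z, |g z - g' z| ∂μ := by
          refine setIntegral_le_integral (hg.sub hg').abs ?_
          exact Eventually.of_forall fun z => abs_nonneg _
      _ = ∫ z, dist (g z) (g' z) ∂μ := by
          simp [Real.dist_eq]
      _ = dist g g' := (L1.dist_eq_integral_dist g g').symm
  exact this.continuous


set_option maxHeartbeats 1000000 in
/-- Surjectivity of the exponential map `L(Ω×Ω,[0,m]) → L(Ω,L(Ω,[0,m]))`: a Borel map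
`F : [0,1] → L¹([0,1];ℝ)` taking values a.e. in `[0,m]` arises from a jointly measurable
function `f : [0,1]² → [0,m]` by taking sections. -/
theorem stmt16 (m : ℝ) (hm : 0 < m)
    (F : ℝ → Lp ℝ 1 (volume.restrict (Set.Icc (0 : ℝ) 1)))
    (hFmeas : @Measurable ℝ _ _ (borel _) F)
    (hFbd : ∀ x ∈ Set.Icc (0 : ℝ) 1,
      ∀ᵐ y ∂(volume.restrict (Set.Icc (0 : ℝ) 1)), (F x : ℝ → ℝ) y ∈ Set.Icc 0 m) :
    ∃ f : ℝ × ℝ → ℝ, Measurable f ∧ (∀ z, f z ∈ Set.Icc 0 m) ∧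
      ∀ᵐ x ∂(volume.restrict (Set.Icc (0 : ℝ) 1)),
        (fun y => f (x, y)) =ᵐ[volume.restrict (Set.Icc (0 : ℝ) 1)] (F x : ℝ → ℝ) := by
  letI : MeasurableSpace (Lp ℝ 1 (volume.restrict (Set.Icc (0 : ℝ) 1))) := borel _
  haveI : BorelSpace (Lp ℝ 1 (volume.restrict (Set.Icc (0 : ℝ) 1))) := ⟨rfl⟩
  have hFm : Measurable F := hFmeas
  -- measurability in x of set integrals
  have hset : ∀ s : Set ℝ,
      Measurable fun x => ∫ z in s, (F x : ℝ → ℝ) z ∂(volume.restrict (Set.Icc (0 : ℝ) 1)) :=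
    fun s => (aux_cont _ s).measurable.comp hFm
  -- the primitive
  set P : ℝ → ℝ → ℝ :=
    fun x t => ∫ z in (0 : ℝ)..t, (F x : ℝ → ℝ) z ∂(volume.restrict (Set.Icc (0 : ℝ) 1))
    with hPdef
  have hPc : ∀ x, Continuous (P x) := fun x =>
    (L1.integrable_coeFn (F x)).continuous_primitive 0
  have hPm : ∀ t, Measurable fun x => P x t := by
    intro t
    have : (fun x => P x t) = fun x =>
        (∫ z in Set.Ioc (0:ℝ) t, (F x : ℝ → ℝ) z ∂(volume.restrict (Set.Icc (0 : ℝ) 1))) -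
          ∫ z in Set.Ioc t 0, (F x : ℝ → ℝ) z ∂(volume.restrict (Set.Icc (0 : ℝ) 1)) :=
      rfl
    rw [this]
    exact (hset _).sub (hset _)
  have hPj : Measurable fun p : ℝ × ℝ => P p.2 p.1 :=
    measurable_uncurry_of_continuous_of_measurable (u := fun t x => P x t)
      (fun x => hPc x) hPm
  -- radii
  set r : ℕ → ℝ := fun n => 1 / (n + 1) with hrdef
  have hr : ∀ n, 0 < r n := fun n => by positivity
  have hrt : Tendsto r atTop (nhdsWithin 0 (Set.Ioi 0)) := by
    apply tendsto_nhdsWithin_of_tendsto_nhds_of_eventually_within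
    · exact tendsto_one_div_add_atTop_nhds_zero_nat
    · exact Eventually.of_forall fun n => hr n
  -- the approximations
  set A : ℕ → ℝ → ℝ → ℝ := fun n x y => (2 * r n)⁻¹ * (P x (y + r n) - P x (y - r n)) with hAdef
  have hAm : ∀ n, Measurable fun z : ℝ × ℝ => A n z.1 z.2 := by
    intro n
    simp only [hAdef]
    exact Measurable.const_mul
      ((hPj.comp ((measurable_snd.add_const _).prodMk measurable_fst)).sub
        (hPj.comp ((measurable_snd.sub_const _).prodMk measurable_fst))) _
  refine ⟨fun z => min m (max 0 (limsup (fun n => A n z.1 z.2) atTop)), ?_, ?_, ?_⟩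
  · exact measurable_const.min (measurable_const.max (Measurable.limsup hAm))
  · intro z
    exact ⟨le_min hm.le (le_max_left _ _), min_le_left _ _⟩
  · filter_upwards [ae_restrict_mem measurableSet_Icc] with x hx
    set g : ℝ → ℝ := (Set.Icc (0 : ℝ) 1).indicator (F x : ℝ → ℝ) with hgdef
    have hgi : Integrable g volume :=
      MeasureTheory.IntegrableOn.integrable_indicator (L1.integrable_coeFn (F x))
        measurableSet_Icc
    have hdiff := IsUnifLocDoublingMeasure.ae_tendsto_average (μ := volume)
      hgi.locallyIntegrable 1
    -- averages equal the approximations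
    have havg : ∀ (y : ℝ) (n : ℕ),
        (⨍ z in closedBall y (r n), g z ∂volume) = A n x y := by
      intro y n
      have hab : y - r n ≤ y + r n := by linarith [hr n]
      have h1 : (∫ z in closedBall y (r n), g z ∂volume)
          = ∫ z in (y - r n)..(y + r n), (F x : ℝ → ℝ) z
              ∂(volume.restrict (Set.Icc (0 : ℝ) 1)) := by
        rw [intervalIntegral.integral_of_le hab, Real.closedBall_eq_Icc,
          ← integral_Icc_eq_integral_Ioc, hgdef, integral_indicator measurableSet_Icc,
          Measure.restrict_restrict measurableSet_Icc,
          Measure.restrict_restrict measurableSet_Icc, Set.inter_comm]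
      have h2 : P x (y + r n) - P x (y - r n)
          = ∫ z in (y - r n)..(y + r n), (F x : ℝ → ℝ) z
              ∂(volume.restrict (Set.Icc (0 : ℝ) 1)) :=
        intervalIntegral.integral_interval_sub_left
          (L1.integrable_coeFn (F x)).intervalIntegrable
          (L1.integrable_coeFn (F x)).intervalIntegrable
      rw [setAverage_eq, h1, Real.volume_real_closedBall (hr n).le, smul_eq_mul, hAdef]
      exact congrArg (fun t => (2 * r n)⁻¹ * t) h2.symm
    filter_upwards [ae_restrict_of_ae hdiff, ae_restrict_mem measurableSet_Icc,
      hFbd x hx] with y hy hyI hybd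
    have htend : Tendsto (fun n => A n x y) atTop (nhds ((F x : ℝ → ℝ) y)) := by
      have hmem : ∀ᶠ n in atTop, y ∈ closedBall ((fun _ => y) n) (1 * r n) :=
        Eventually.of_forall fun n => by
          simp only [mem_closedBall, dist_self, one_mul]
          exact (hr n).le
      have := hy (fun _ => y) r hrt hmem
      rw [hgdef, Set.indicator_of_mem hyI] at this
      exact this.congr fun n => havg y n
    have hls : limsup (fun n => A n x y) atTop = (F x : ℝ → ℝ) y := htend.limsup_eq
    show min m (max 0 _) = _
    rw [hls, max_eq_right hybd.1, min_eq_right hybd.2]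
end

section
/- Let μ be Lebesgue measure on [0,1] and fix n ∈ ℕ. The subset of L¹(μ; ℝ) consisting of all equivalence classes of indicator functions of sets of the form ⋃_{i=1}^n [a_i, a_i + e_i], where a_i, e_i ∈ [0,1] and a_i + e_i ≤ 1 for every i, is a compact subset of L¹(μ; ℝ) (for the L¹ norm topology). -/
open MeasureTheory Set
open scoped ENNReal NNReal symmDiff

namespace Stmt19Aux

noncomputable def μ01 : Measure ℝ := volume.restrict (Set.Icc (0 : ℝ) 1)

lemma μ01_ne_top (s : Set ℝ) : μ01 s ≠ ⊤ :=
  ne_of_lt (lt_of_le_of_lt (measure_mono (Set.subset_univ s))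
    (by rw [μ01, Measure.restrict_apply_univ]; exact measure_Icc_lt_top))

noncomputable def F (n : ℕ) (p : (Fin n → ℝ) × (Fin n → ℝ)) : Lp ℝ 1 μ01 :=
  indicatorConstLp 1 (MeasurableSet.iUnion fun i =>
      (measurableSet_Icc : MeasurableSet (Set.Icc (p.1 i) (p.1 i + p.2 i))))
    (μ01_ne_top _) (1 : ℝ)

lemma F_coe (n : ℕ) (p : (Fin n → ℝ) × (Fin n → ℝ)) :
    ⇑(F n p) =ᵐ[μ01] (⋃ i, Set.Icc (p.1 i) (p.1 i + p.2 i)).indicator (fun _ => (1:ℝ)) :=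
  indicatorConstLp_coeFn

lemma symmDiff_Icc_subset (a b a' b' : ℝ) :
    symmDiff (Set.Icc a b) (Set.Icc a' b') ⊆
      Set.Icc (min a a') (max a a') ∪ Set.Icc (min b b') (max b b') := by
  intro x hx
  rw [Set.mem_symmDiff] at hx
  rcases hx with ⟨⟨h1, h2⟩, h3⟩ | ⟨⟨h1, h2⟩, h3⟩ <;>
    rw [Set.mem_Icc, not_and_or, not_le, not_le] at h3 <;>
    rcases h3 with h3 | h3
  · exact Or.inl ⟨(min_le_left a a').trans h1, h3.le.trans (le_max_right a a')⟩
  · exact Or.inr ⟨(min_le_right b b').trans h3.le, h2.trans (le_max_left b b')⟩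
  · exact Or.inl ⟨(min_le_right a a').trans h1, h3.le.trans (le_max_left a a')⟩
  · exact Or.inr ⟨(min_le_left b b').trans h3.le, h2.trans (le_max_right b b')⟩

lemma volume_Icc_minmax (a a' : ℝ) :
    volume (Set.Icc (min a a') (max a a')) = edist a a' := by
  rw [Real.volume_Icc, edist_dist, Real.dist_eq, max_sub_min_eq_abs, abs_sub_comm]

lemma symmDiff_iUnion_subset {ι : Type*} (s t : ι → Set ℝ) :
    symmDiff (⋃ i, s i) (⋃ i, t i) ⊆ ⋃ i, symmDiff (s i) (t i) := by
  intro x hx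
  rw [Set.mem_symmDiff] at hx
  rcases hx with ⟨h1, h2⟩ | ⟨h1, h2⟩ <;> rw [Set.mem_iUnion] at h1 <;>
    obtain ⟨i, hi⟩ := h1 <;> rw [Set.mem_iUnion] at h2 <;>
    push_neg at h2 <;> refine Set.mem_iUnion.2 ⟨i, ?_⟩ <;>
    rw [Set.mem_symmDiff]
  · exact Or.inl ⟨hi, h2 i⟩
  · exact Or.inr ⟨hi, h2 i⟩

lemma lip (n : ℕ) : LipschitzWith (3 * n) (F n) := by
  intro p q
  rw [Lp.edist_def]
  have hcongr : eLpNorm (⇑(F n p) - ⇑(F n q)) 1 μ01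
      = eLpNorm ((⋃ i, Set.Icc (p.1 i) (p.1 i + p.2 i)).indicator (fun _ => (1:ℝ))
        - (⋃ i, Set.Icc (q.1 i) (q.1 i + q.2 i)).indicator (fun _ => (1:ℝ))) 1 μ01 :=
    eLpNorm_congr_ae ((F_coe n p).sub (F_coe n q))
  rw [hcongr]
  set s : Fin n → Set ℝ := fun i => Set.Icc (p.1 i) (p.1 i + p.2 i)
  set t : Fin n → Set ℝ := fun i => Set.Icc (q.1 i) (q.1 i + q.2 i)
  have hpt : ∀ x, ‖(⋃ i, s i).indicator (fun _ => (1:ℝ)) x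
      - (⋃ i, t i).indicator (fun _ => (1:ℝ)) x‖
      ≤ ‖(symmDiff (⋃ i, s i) (⋃ i, t i)).indicator (fun _ => (1:ℝ)) x‖ := by
    intro x
    by_cases hs : x ∈ ⋃ i, s i <;> by_cases ht : x ∈ ⋃ i, t i <;>
      simp [Set.indicator_apply, hs, ht, Set.mem_symmDiff]
  calc eLpNorm ((⋃ i, s i).indicator (fun _ => (1:ℝ))
        - (⋃ i, t i).indicator fun _ => (1:ℝ)) 1 μ01
      ≤ eLpNorm ((symmDiff (⋃ i, s i) (⋃ i, t i)).indicator fun _ => (1:ℝ)) 1 μ01 :=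
        eLpNorm_mono hpt
    _ = ‖(1:ℝ)‖₊ * μ01 (symmDiff (⋃ i, s i) (⋃ i, t i)) ^ ((1:ℝ≥0∞).toReal)⁻¹ := by
        rw [eLpNorm_indicator_const (((MeasurableSet.iUnion fun i => measurableSet_Icc).symmDiff
          (MeasurableSet.iUnion fun i => measurableSet_Icc))) one_ne_zero ENNReal.one_ne_top]
        simp
        rfl
    _ ≤ volume (symmDiff (⋃ i, s i) (⋃ i, t i)) := by
        simp only [nnnorm_one, ENNReal.coe_one, one_mul, ENNReal.toReal_one, inv_one,
          ENNReal.rpow_one]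
        exact Measure.restrict_le_self _
    _ ≤ volume (⋃ i, symmDiff (s i) (t i)) := measure_mono (symmDiff_iUnion_subset s t)
    _ ≤ ∑ i : Fin n, volume (symmDiff (s i) (t i)) := measure_iUnion_fintype_le _ _
    _ ≤ ∑ i : Fin n, (3 : ℝ≥0∞) * edist p q := by
        refine Finset.sum_le_sum fun i _ => ?_
        have h1 : edist (p.1 i) (q.1 i) ≤ edist p q :=
          (edist_le_pi_edist _ _ i).trans (le_max_left _ _)
        have h2 : edist (p.2 i) (q.2 i) ≤ edist p q :=
          (edist_le_pi_edist _ _ i).trans (le_max_right _ _)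
        calc volume (symmDiff (s i) (t i))
            ≤ volume (Set.Icc (min (p.1 i) (q.1 i)) (max (p.1 i) (q.1 i))
              ∪ Set.Icc (min (p.1 i + p.2 i) (q.1 i + q.2 i))
                  (max (p.1 i + p.2 i) (q.1 i + q.2 i))) :=
              measure_mono (symmDiff_Icc_subset _ _ _ _)
          _ ≤ edist (p.1 i) (q.1 i) + edist (p.1 i + p.2 i) (q.1 i + q.2 i) := by
              rw [← volume_Icc_minmax, ← volume_Icc_minmax]; exact measure_union_le _ _
          _ ≤ edist p q + (edist (p.1 i) (q.1 i) + edist (p.2 i) (q.2 i)) := by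
              gcongr
              exact edist_add_add_le _ _ _ _
          _ ≤ edist p q + (edist p q + edist p q) := by gcongr
          _ = 3 * edist p q := by ring
    _ = (3 * n : ℝ≥0) * edist p q := by
        simp [Finset.sum_const, mul_assoc]
        ring

def K (n : ℕ) : Set ((Fin n → ℝ) × (Fin n → ℝ)) :=
  {p | (∀ i, p.1 i ∈ Set.Icc (0:ℝ) 1) ∧ (∀ i, p.2 i ∈ Set.Icc (0:ℝ) 1) ∧
    ∀ i, p.1 i + p.2 i ≤ 1}

lemma isCompact_K (n : ℕ) : IsCompact (K n) := by
  have h1 : K n = (Set.Icc (0 : Fin n → ℝ) 1 ×ˢ Set.Icc (0 : Fin n → ℝ) 1)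
      ∩ ⋂ i, {p : (Fin n → ℝ) × (Fin n → ℝ) | p.1 i + p.2 i ≤ 1} := by
    ext p
    simp only [K, Set.mem_setOf_eq, Set.mem_inter_iff, Set.mem_prod, Set.mem_Icc,
      Pi.le_def, Set.mem_iInter, Pi.zero_apply, Pi.one_apply, forall_and]
    tauto
  rw [h1]
  exact (isCompact_Icc.prod isCompact_Icc).inter_right
    (isClosed_iInter fun i => isClosed_le (by fun_prop) continuous_const)

end Stmt19Aux

open Stmt19Aux in
/-- The set of (classes of) indicator functions of unions of `n` closed subintervals of
`[0,1]` is a compact subset of `L¹([0,1];ℝ)`. -/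
theorem stmt19 (n : ℕ) :
    IsCompact {f : Lp ℝ 1 (volume.restrict (Set.Icc (0 : ℝ) 1)) |
      ∃ a e : Fin n → ℝ, (∀ i, a i ∈ Set.Icc (0 : ℝ) 1) ∧
        (∀ i, e i ∈ Set.Icc (0 : ℝ) 1) ∧ (∀ i, a i + e i ≤ 1) ∧
        (f : ℝ → ℝ) =ᵐ[volume.restrict (Set.Icc (0 : ℝ) 1)]
          Set.indicator (⋃ i, Set.Icc (a i) (a i + e i)) 1} := by
  show IsCompact {f : Lp ℝ 1 μ01 |
      ∃ a e : Fin n → ℝ, (∀ i, a i ∈ Set.Icc (0 : ℝ) 1) ∧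
        (∀ i, e i ∈ Set.Icc (0 : ℝ) 1) ∧ (∀ i, a i + e i ≤ 1) ∧
        (f : ℝ → ℝ) =ᵐ[μ01] Set.indicator (⋃ i, Set.Icc (a i) (a i + e i)) 1}
  have himg : {f : Lp ℝ 1 μ01 |
      ∃ a e : Fin n → ℝ, (∀ i, a i ∈ Set.Icc (0 : ℝ) 1) ∧
        (∀ i, e i ∈ Set.Icc (0 : ℝ) 1) ∧ (∀ i, a i + e i ≤ 1) ∧
        (f : ℝ → ℝ) =ᵐ[μ01] Set.indicator (⋃ i, Set.Icc (a i) (a i + e i)) 1}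
      = F n '' K n := by
    ext f
    simp only [Set.mem_setOf_eq, Set.mem_image]
    constructor
    · rintro ⟨a, e, ha, he, hae, hf⟩
      refine ⟨(a, e), ⟨ha, he, hae⟩, ?_⟩
      exact Lp.ext ((F_coe n (a, e)).trans hf.symm)
    · rintro ⟨p, ⟨ha, he, hae⟩, rfl⟩
      exact ⟨p.1, p.2, ha, he, hae, F_coe n p⟩
  rw [himg]
  exact (isCompact_K n).image (lip n).continuous
end
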